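/- Fix an integer m ≥ 1. The polynomials F_{m,2}(n;q) = Σ_{k=0}^n k!·W_m(n,k)·q^k and F_{m,1}(n;q) = Σ_{k=0}^n k!·W_m(n,k)·m^k·q^k, where W_m(n,k) are the Whitney numbers of the second kind, are each strongly q-log-convex: for all n ≥ s ≥ 1, F(s-1;q)·F(n+1;q) − F(s;q)·F(n;q) has only nonnegative coefficients. -/
import Mathlib


open Polynomial

/-- The Whitney numbers of the second kind of the Dowling lattice over a group of
order `m`: `W_m(0,0) = 1`, `W_m(n,k) = 0` for `k > n`, and
`W_m(n,k) = (1+mk)·W_m(n-1,k) + W_m(n-1,k-1)` for `n ≥ k ≥ 1`. -/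
def whitney (m : ℕ) : ℕ → ℕ → ℕ
  | 0, 0 => 1
  | 0, _ + 1 => 0
  | n + 1, 0 => whitney m n 0
  | n + 1, k + 1 => (1 + m * (k + 1)) * whitney m n (k + 1) + whitney m n k

/-- The polynomial `F_{m,1}(n;q) = Σ_{k=0}^n k!·W_m(n,k)·m^k·q^k`. -/
noncomputable def dowlingF1 (m n : ℕ) : Polynomial ℝ :=
  ∑ k ∈ Finset.range (n + 1),
    C ((Nat.factorial k * whitney m n k * m ^ k : ℕ) : ℝ) * X ^ k

/-- The polynomial `F_{m,2}(n;q) = Σ_{k=0}^n k!·W_m(n,k)·q^k`. -/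
noncomputable def dowlingF2 (m n : ℕ) : Polynomial ℝ :=
  ∑ k ∈ Finset.range (n + 1),
    C ((Nat.factorial k * whitney m n k : ℕ) : ℝ) * X ^ k

lemma whitney_succ_succ (m n k : ℕ) :
    whitney m (n+1) (k+1) = (1 + m * (k+1)) * whitney m n (k+1) + whitney m n k := rfl

lemma whitney_succ_zero (m n : ℕ) : whitney m (n+1) 0 = whitney m n 0 := rfl

lemma whitney_eq_zero (m : ℕ) : ∀ {n k : ℕ}, n < k → whitney m n k = 0 := by
  intro n
  induction n with
  | zero =>
    intro k hk
    obtain ⟨k', rfl⟩ : ∃ k', k = k' + 1 := ⟨k - 1, by omega⟩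
    rfl
  | succ n ih =>
    intro k hk
    obtain ⟨k', rfl⟩ : ∃ k', k = k' + 1 := ⟨k - 1, by omega⟩
    rw [whitney_succ_succ, ih (by omega), ih (by omega)]; ring

lemma whitney_pos (m : ℕ) : ∀ {n k : ℕ}, k ≤ n → 0 < whitney m n k := by
  intro n
  induction n with
  | zero =>
    intro k hk
    obtain rfl : k = 0 := by omega
    exact Nat.one_pos
  | succ n ih =>
    intro k hk
    cases k with
    | zero => rw [whitney_succ_zero]; exact ih (Nat.zero_le _)
    | succ k =>
      rw [whitney_succ_succ]
      exact Nat.add_pos_right _ (ih (by omega))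

lemma whitney_zero_right (m : ℕ) : ∀ n, whitney m n 0 = 1 := by
  intro n; induction n with
  | zero => rfl
  | succ n ih => rw [whitney_succ_zero, ih]

lemma shift_of (w : ℕ → ℕ) (hz : ∀ j, w j = 0 → w (j+1) = 0)
    (hlc : ∀ k, w k * w (k+2) ≤ w (k+1) * w (k+1)) :
    ∀ i j, i ≤ j → w i * w (j+2) ≤ w (i+1) * w (j+1) := by
  intro i j hij
  induction j, hij using Nat.le_induction with
  | base => exact hlc i
  | succ j hij ih =>
    by_cases h0 : w (j+1) = 0
    · have h2 : w (j+2) = 0 := hz _ h0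
      have h3 : w (j+3) = 0 := hz _ h2
      have e : w i * w (j+1+2) = 0 := by
        rw [show j+1+2 = j+3 from rfl, h3, Nat.mul_zero]
      rw [e]
      exact Nat.zero_le _
    · have hpos : 0 < w (j+1) := Nat.pos_of_ne_zero h0
      have chain : w (j+1) * (w i * w (j+3)) ≤ w (j+1) * (w (i+1) * w (j+2)) := by
        calc w (j+1) * (w i * w (j+3)) = w i * (w (j+1) * w (j+3)) := by ring
          _ ≤ w i * (w (j+2) * w (j+2)) := Nat.mul_le_mul_left _ (hlc (j+1))
          _ = (w i * w (j+2)) * w (j+2) := by ring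
          _ ≤ (w (i+1) * w (j+1)) * w (j+2) := Nat.mul_le_mul_right _ ih
          _ = w (j+1) * (w (i+1) * w (j+2)) := by ring
      exact Nat.le_of_mul_le_mul_left chain hpos

lemma genLC_of (w : ℕ → ℕ) (hz : ∀ j, w j = 0 → w (j+1) = 0)
    (hlc : ∀ k, w k * w (k+2) ≤ w (k+1) * w (k+1)) :
    ∀ e c d, c ≤ d → ∀ a b, a + e = c → d + e = b → w a * w b ≤ w c * w d := by
  intro e
  induction e with
  | zero =>
    intro c d hcd a b ha hb
    obtain rfl : a = c := by omega
    obtain rfl : b = d := by omega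
    exact Nat.le_refl _
  | succ e ih =>
    intro c d hcd a b ha hb
    obtain ⟨d', rfl⟩ : ∃ d', d = d' + 1 := ⟨d - 1, by omega⟩
    have hb' : b = d' + e + 2 := by omega
    subst hb'
    have step : w a * w (d' + e + 2) ≤ w (a+1) * w (d' + e + 1) :=
      shift_of w hz hlc a (d' + e) (by omega)
    have tail : w (a+1) * w (d' + e + 1) ≤ w c * w (d' + 1) :=
      ih c (d' + 1) hcd (a+1) (d' + e + 1) (by omega) (by omega)
    exact Nat.le_trans step tail

lemma whitney_hz (m n : ℕ) : ∀ j, whitney m n j = 0 → whitney m n (j+1) = 0 := by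
  intro j hj
  have : n < j := by
    by_contra h
    exact Nat.lt_irrefl 0 (hj ▸ whitney_pos m (by omega))
  exact whitney_eq_zero m (by omega)

lemma whitney_lc (m : ℕ) :
    ∀ n k, whitney m n k * whitney m n (k+2) ≤ whitney m n (k+1) * whitney m n (k+1) := by
  intro n
  induction n with
  | zero =>
    intro k
    rw [whitney_eq_zero m (show 0 < k + 2 by omega)]
    simp
  | succ n ih =>
    have hsh := shift_of (whitney m n) (whitney_hz m n) ih
    intro k
    cases k with
    | zero =>
      have E0 : whitney m (n+1) 0 = whitney m n 0 := rfl
      have E1 : whitney m (n+1) 1 = (1 + m*1) * whitney m n 1 + whitney m n 0 := rfl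
      have E2 : whitney m (n+1) 2 = (1 + m*2) * whitney m n 2 + whitney m n 1 := rfl
      have H1 : whitney m n 0 * whitney m n 2 ≤ whitney m n 1 * whitney m n 1 := ih 0
      show whitney m (n+1) 0 * whitney m (n+1) 2 ≤ whitney m (n+1) 1 * whitney m (n+1) 1
      rw [E0, E1, E2]
      zify at H1 ⊢
      have w0 := Int.natCast_nonneg (whitney m n 0)
      have w1 := Int.natCast_nonneg (whitney m n 1)
      have T1 : (1+2*(m:ℤ)) * ((whitney m n 0 : ℤ) * (whitney m n 2))
          ≤ (1+2*(m:ℤ)) * ((whitney m n 1 : ℤ) * (whitney m n 1)) :=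
        mul_le_mul_of_nonneg_left H1 (by positivity)
      have T3 : (0:ℤ) ≤ (m:ℤ)^2 * ((whitney m n 1 : ℤ) * (whitney m n 1)) := by positivity
      have T4 : (0:ℤ) ≤ (whitney m n 0 : ℤ) * (whitney m n 1) := by positivity
      have T5 : (0:ℤ) ≤ (whitney m n 0 : ℤ) * (whitney m n 0) := by positivity
      nlinarith [T1, T3, T4, T5]
    | succ j =>
      have E1 : whitney m (n+1) (j+1) = (1 + m*(j+1)) * whitney m n (j+1) + whitney m n j := rfl
      have E2 : whitney m (n+1) (j+2) = (1 + m*(j+2)) * whitney m n (j+2) + whitney m n (j+1) := rfl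
      have E3 : whitney m (n+1) (j+3) = (1 + m*(j+3)) * whitney m n (j+3) + whitney m n (j+2) := rfl
      have H1 : whitney m n j * whitney m n (j+2) ≤ whitney m n (j+1) * whitney m n (j+1) := ih j
      have H2 : whitney m n (j+1) * whitney m n (j+3) ≤ whitney m n (j+2) * whitney m n (j+2) := ih (j+1)
      have H3 : whitney m n j * whitney m n (j+3) ≤ whitney m n (j+1) * whitney m n (j+2) :=
        hsh j (j+1) (by omega)
      show whitney m (n+1) (j+1) * whitney m (n+1) (j+3)
          ≤ whitney m (n+1) (j+2) * whitney m (n+1) (j+2)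
      rw [E1, E2, E3]
      zify at H1 H2 H3 ⊢
      have T1 : (1+(m:ℤ)*((j:ℤ)+2))^2 * ((whitney m n (j+1) : ℤ) * (whitney m n (j+3)))
          ≤ (1+(m:ℤ)*((j:ℤ)+2))^2 * ((whitney m n (j+2) : ℤ) * (whitney m n (j+2))) :=
        mul_le_mul_of_nonneg_left H2 (by positivity)
      have T2 : (1+(m:ℤ)*((j:ℤ)+3)) * ((whitney m n j : ℤ) * (whitney m n (j+3)))
          ≤ (1+(m:ℤ)*((j:ℤ)+3)) * ((whitney m n (j+1) : ℤ) * (whitney m n (j+2))) :=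
        mul_le_mul_of_nonneg_left H3 (by positivity)
      have T3 : (0:ℤ) ≤ (m:ℤ)^2 * ((whitney m n (j+1) : ℤ) * (whitney m n (j+3))) := by positivity
      nlinarith [T1, T2, T3, H1]

lemma whitney_tp2 (m : ℕ) : ∀ p q, p ≤ q → ∀ j k l, j ≤ k → k ≤ l →
    whitney m p l * whitney m q (k - j) ≤ whitney m p k * whitney m q (l - j) := by
  intro p q hpq
  induction q, hpq using Nat.le_induction with
  | base =>
    intro j k l hjk hkl
    have hz := whitney_hz m p
    have hlc := whitney_lc m p
    rcases le_total k (l - j) with h | h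
    · have := genLC_of (whitney m p) hz hlc j k (l-j) h (k-j) l (by omega) (by omega)
      calc whitney m p l * whitney m p (k-j) = whitney m p (k-j) * whitney m p l := by ring
        _ ≤ whitney m p k * whitney m p (l-j) := this
    · have := genLC_of (whitney m p) hz hlc (l-k) (l-j) k h (k-j) l (by omega) (by omega)
      calc whitney m p l * whitney m p (k-j) = whitney m p (k-j) * whitney m p l := by ring
        _ ≤ whitney m p (l-j) * whitney m p k := this
        _ = whitney m p k * whitney m p (l-j) := by ring
  | succ q hq ih =>
    intro j k l hjk hkl
    rcases Nat.eq_zero_or_pos (l - j) with hl0 | hlpos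
    · have hk0 : k - j = 0 := by omega
      have hkl' : k = l := by omega
      subst hkl'
      rw [hk0]
    · obtain ⟨t, ht⟩ : ∃ t, l - j = t + 1 := ⟨l - j - 1, by omega⟩
      rcases Nat.eq_zero_or_pos (k - j) with hk0 | hkpos
      · rw [hk0, ht, whitney_succ_zero, whitney_succ_succ]
        have h1 := ih j k l hjk hkl
        rw [hk0, ht] at h1
        have h2 : whitney m q (t+1) ≤ (1 + m*(t+1)) * whitney m q (t+1) + whitney m q t := by
          have := Nat.le_mul_of_pos_left (whitney m q (t+1)) (show 0 < 1 + m*(t+1) by omega)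
          omega
        exact Nat.le_trans h1 (Nat.mul_le_mul_left _ h2)
      · obtain ⟨u, hu⟩ : ∃ u, k - j = u + 1 := ⟨k - j - 1, by omega⟩
        rw [hu, ht, whitney_succ_succ, whitney_succ_succ]
        have h1 := ih j k l hjk hkl
        rw [hu, ht] at h1
        have h2 := ih (j+1) k l (by omega) hkl
        rw [show k - (j+1) = u by omega, show l - (j+1) = t by omega] at h2
        have h3 : (1 + m*(u+1)) * (whitney m p l * whitney m q (u+1))
            ≤ (1 + m*(t+1)) * (whitney m p k * whitney m q (t+1)) :=
          Nat.mul_le_mul (Nat.add_le_add_left (Nat.mul_le_mul_left m (by omega : u+1 ≤ t+1)) 1) h1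
        zify at h2 h3 ⊢
        nlinarith [h2, h3]

open Polynomial

def acoef (m c n k : ℕ) : ℕ := Nat.factorial k * whitney m n k * c ^ k

lemma acoef_tp2 (m c p q k l : ℕ) (hpq : p ≤ q) (hkl : k ≤ l) :
    acoef m c p l * acoef m c q k ≤ acoef m c p k * acoef m c q l := by
  have h := whitney_tp2 m p q hpq 0 k l (Nat.zero_le _) hkl
  simp only [Nat.sub_zero] at h
  calc acoef m c p l * acoef m c q k
      = (Nat.factorial l * Nat.factorial k * (c^l * c^k)) * (whitney m p l * whitney m q k) := by
        simp only [acoef]; ring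
    _ ≤ (Nat.factorial l * Nat.factorial k * (c^l * c^k)) * (whitney m p k * whitney m q l) :=
        Nat.mul_le_mul_left _ h
    _ = acoef m c p k * acoef m c q l := by simp only [acoef]; ring

lemma acoef_eq_zero (m c n k : ℕ) (h : n < k) : acoef m c n k = 0 := by
  simp [acoef, whitney_eq_zero m h]

lemma acoef_rec (m c n k : ℕ) :
    (acoef m c (n+1) k : ℝ)
      = (1 + (m:ℝ)*(k:ℝ)) * (acoef m c n k : ℝ) + (k:ℝ) * (c:ℝ) * (acoef m c n (k-1) : ℝ) := by
  cases k with
  | zero => simp [acoef, whitney_succ_zero]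
  | succ k =>
    simp only [acoef, whitney_succ_succ, Nat.add_sub_cancel, Nat.factorial_succ]
    push_cast
    ring

noncomputable def dowF (m c n : ℕ) : Polynomial ℝ :=
  ∑ k ∈ Finset.range (n + 1),
    C ((Nat.factorial k * whitney m n k * c ^ k : ℕ) : ℝ) * X ^ k

lemma coeff_dowF (m c n j : ℕ) : (dowF m c n).coeff j = (acoef m c n j : ℝ) := by
  rw [dowF, Polynomial.finset_sum_coeff]
  simp only [Polynomial.coeff_C_mul, Polynomial.coeff_X_pow, mul_ite, mul_one, mul_zero]
  rw [Finset.sum_ite_eq (Finset.range (n+1)) j]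
  by_cases hj : j ∈ Finset.range (n+1)
  · rw [if_pos hj]; rfl
  · rw [if_neg hj, acoef_eq_zero]
    · simp
    · simp [Finset.mem_range] at hj; omega

lemma S_nonneg (m c p q : ℕ) (hpq : p ≤ q) (t : ℕ) :
    0 ≤ ∑ k ∈ Finset.range (t+1),
        ((t:ℝ) - 2*(k:ℝ)) * (acoef m c p k : ℝ) * (acoef m c q (t-k) : ℝ) := by
  set F : ℕ → ℝ := fun k => ((t:ℝ) - 2*(k:ℝ)) * (acoef m c p k : ℝ) * (acoef m c q (t-k) : ℝ)
    with hF
  have key : ∀ k ∈ Finset.range (t+1), 0 ≤ F k + F (t - k) := by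
    intro k hk
    have hk' : k ≤ t := by simp [Finset.mem_range] at hk; omega
    have e2 : t - (t - k) = k := by omega
    have ecast : ((t - k : ℕ) : ℝ) = (t:ℝ) - (k:ℝ) := by
      rw [Nat.cast_sub hk']
    rw [hF]
    simp only [e2, ecast]
    rcases le_total (2*k) t with h | h
    · have hm := acoef_tp2 m c p q k (t-k) hpq (by omega)
      have hm' : ((acoef m c p (t-k) : ℝ) * (acoef m c q k : ℝ))
          ≤ (acoef m c p k : ℝ) * (acoef m c q (t-k) : ℝ) := by exact_mod_cast hm
      have hcoef : 0 ≤ (t:ℝ) - 2*(k:ℝ) := by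
        have : ((2*k : ℕ):ℝ) ≤ (t:ℕ) := Nat.cast_le.mpr h
        push_cast at this; linarith
      nlinarith [hm', hcoef]
    · have hm := acoef_tp2 m c p q (t-k) k hpq (by omega)
      have hm' : ((acoef m c p k : ℝ) * (acoef m c q (t-k) : ℝ))
          ≤ (acoef m c p (t-k) : ℝ) * (acoef m c q k : ℝ) := by exact_mod_cast hm
      have hcoef : (t:ℝ) - 2*(k:ℝ) ≤ 0 := by
        have : ((t : ℕ):ℝ) ≤ ((2*k:ℕ):ℝ) := Nat.cast_le.mpr h
        push_cast at this; linarith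
      nlinarith [hm', hcoef]
  have hr : ∑ k ∈ Finset.range (t+1), F (t - k) = ∑ k ∈ Finset.range (t+1), F k := by
    have := Finset.sum_range_reflect F (t+1)
    simpa using this
  have h2 : 0 ≤ ∑ k ∈ Finset.range (t+1), (F k + F (t - k)) := Finset.sum_nonneg key
  rw [Finset.sum_add_distrib, hr] at h2
  linarith

lemma key_ineq (m c p q : ℕ) (hpq : p ≤ q) (i : ℕ) :
    0 ≤ (dowF m c p * dowF m c (q+1) - dowF m c (p+1) * dowF m c q).coeff i := by
  rw [Polynomial.coeff_sub, Polynomial.coeff_mul, Polynomial.coeff_mul,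
    Finset.Nat.sum_antidiagonal_eq_sum_range_succ_mk,
    Finset.Nat.sum_antidiagonal_eq_sum_range_succ_mk]
  simp only [coeff_dowF]
  rw [← Finset.sum_sub_distrib]
  cases i with
  | zero =>
    simp [acoef, whitney_zero_right, whitney_succ_zero]
  | succ t =>
    have step : ∀ k ∈ Finset.range (t+2),
        ((acoef m c p k : ℝ) * (acoef m c (q+1) (t+1-k) : ℝ)
          - (acoef m c (p+1) k : ℝ) * (acoef m c q (t+1-k) : ℝ))
        = (m:ℝ) * ((((t+1:ℕ)):ℝ) - 2*(k:ℝ))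
              * ((acoef m c p k : ℝ) * (acoef m c q (t+1-k) : ℝ))
          + (c:ℝ) * (((((t+1:ℕ)):ℝ) - (k:ℝ))
                * ((acoef m c p k : ℝ) * (acoef m c q (t+1-k-1) : ℝ))
              - (k:ℝ) * ((acoef m c p (k-1) : ℝ) * (acoef m c q (t+1-k) : ℝ))) := by
      intro k hk
      have hk' : k ≤ t+1 := by simp [Finset.mem_range] at hk; omega
      rw [acoef_rec m c q (t+1-k), acoef_rec m c p k]
      have ec : ((t+1-k : ℕ):ℝ) = (((t+1:ℕ)):ℝ) - (k:ℝ) := by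
        rw [Nat.cast_sub hk']
      rw [ec]
      ring
    rw [Finset.sum_congr rfl step, Finset.sum_add_distrib]
    apply add_nonneg
    · have hs := S_nonneg m c p q hpq (t+1)
      have e : ∑ k ∈ Finset.range (t+2),
            (m:ℝ) * ((((t+1:ℕ)):ℝ) - 2*(k:ℝ))
              * ((acoef m c p k : ℝ) * (acoef m c q (t+1-k) : ℝ))
          = (m:ℝ) * ∑ k ∈ Finset.range (t+1+1),
              ((((t+1:ℕ)):ℝ) - 2*(k:ℝ)) * (acoef m c p k : ℝ) * (acoef m c q (t+1-k) : ℝ) := by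
        rw [Finset.mul_sum]
        exact Finset.sum_congr rfl (fun k _ => by ring)
      rw [e]
      exact mul_nonneg (by positivity) hs
    · have eB : ∑ k ∈ Finset.range (t+2),
            ((((t+1:ℕ)):ℝ) - (k:ℝ)) * ((acoef m c p k : ℝ) * (acoef m c q (t+1-k-1) : ℝ))
          = ∑ k ∈ Finset.range (t+1),
              ((((t+1:ℕ)):ℝ) - (k:ℝ)) * ((acoef m c p k : ℝ) * (acoef m c q (t-k) : ℝ)) := by
        rw [Finset.sum_range_succ]
        have hlast : ((((t+1:ℕ)):ℝ) - ((t+1:ℕ):ℝ))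
            * ((acoef m c p (t+1) : ℝ) * (acoef m c q (t+1-(t+1)-1) : ℝ)) = 0 := by
          push_cast; ring
        rw [hlast, add_zero]
        refine Finset.sum_congr rfl (fun k hk => ?_)
        have hk' : k ≤ t := by simp [Finset.mem_range] at hk; omega
        rw [show t+1-k-1 = t-k by omega]
      have eD : ∑ k ∈ Finset.range (t+2),
            (k:ℝ) * ((acoef m c p (k-1) : ℝ) * (acoef m c q (t+1-k) : ℝ))
          = ∑ k ∈ Finset.range (t+1),
              ((k:ℝ)+1) * ((acoef m c p k : ℝ) * (acoef m c q (t-k) : ℝ)) := by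
        rw [Finset.sum_range_succ']
        simp only [Nat.cast_zero, zero_mul, add_zero]
        refine Finset.sum_congr rfl (fun k hk => ?_)
        rw [show k+1-1 = k by omega, show t+1-(k+1) = t-k by omega]
        push_cast; ring
      rw [← Finset.mul_sum, Finset.sum_sub_distrib, eB, eD, ← Finset.sum_sub_distrib]
      have e2 : ∑ k ∈ Finset.range (t+1),
            (((((t+1:ℕ)):ℝ) - (k:ℝ)) * ((acoef m c p k : ℝ) * (acoef m c q (t-k) : ℝ))
              - ((k:ℝ)+1) * ((acoef m c p k : ℝ) * (acoef m c q (t-k) : ℝ)))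
          = ∑ k ∈ Finset.range (t+1),
              ((t:ℝ) - 2*(k:ℝ)) * (acoef m c p k : ℝ) * (acoef m c q (t-k) : ℝ) := by
        refine Finset.sum_congr rfl (fun k hk => ?_)
        push_cast; ring
      rw [e2]
      exact mul_nonneg (by positivity) (S_nonneg m c p q hpq t)

/-- For each fixed `m ≥ 1`, the polynomials `F_{m,2}(n;q)` and
`F_{m,1}(n;q)` are each strongly `q`-log-convex: for all `n ≥ s ≥ 1`,
`F(s-1;q)·F(n+1;q) − F(s;q)·F(n;q)` has nonnegative coefficients. -/
theorem dowlingF_strongly_q_log_convex (m : ℕ) (hm : 1 ≤ m) :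
    ∀ s n : ℕ, 1 ≤ s → s ≤ n →
      (∀ i : ℕ,
        0 ≤ (dowlingF2 m (s - 1) * dowlingF2 m (n + 1)
              - dowlingF2 m s * dowlingF2 m n).coeff i) ∧
      (∀ i : ℕ,
        0 ≤ (dowlingF1 m (s - 1) * dowlingF1 m (n + 1)
              - dowlingF1 m s * dowlingF1 m n).coeff i) := by
  intro s n hs hn
  obtain ⟨p, rfl⟩ : ∃ p, s = p + 1 := ⟨s - 1, by omega⟩
  have hsub : p + 1 - 1 = p := by omega
  have h2 : ∀ r, dowlingF2 m r = dowF m 1 r := by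
    intro r
    unfold dowlingF2 dowF
    refine Finset.sum_congr rfl (fun k _ => ?_)
    norm_num
  have h1 : ∀ r, dowlingF1 m r = dowF m m r := fun r => rfl
  constructor
  · intro i
    rw [hsub, h2, h2, h2, h2]
    exact key_ineq m 1 p n (by omega) i
  · intro i
    rw [hsub, h1, h1, h1, h1]
    exact key_ineq m m p n (by omega) i
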